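/- (Final step of the proof of Proposition 9.1.) Let n ≥ 1 and let Π ∈ GL_n(ℚ_p) be the matrix whose (i, i+1)-entry is 1 for 1 ≤ i ≤ n−1, whose (n,1)-entry is p, and whose other entries are 0. Then GL_n(ℚ_p) is generated as a group by GL_n(ℤ_p) together with Π. -/

import Mathlib

open Matrix

section Aux

variable (p : ℕ) [Fact p.Prime]

private lemma aux_mulVec_map {n : ℕ} {R S : Type*} [CommRing R] [CommRing S] (f : R →+* S)
    (M : Matrix (Fin n) (Fin n) R) (v : Fin n → R) :
    (M.map f) *ᵥ (f ∘ v) = f ∘ (M *ᵥ v) := by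
  funext i
  simp [Matrix.mulVec, dotProduct, map_sum, _root_.map_mul]

private lemma aux_toZMod_zero_of_dvd {x : ℤ_[p]} (h : (p : ℤ_[p]) ∣ x) :
    PadicInt.toZMod x = 0 := by
  obtain ⟨y, rfl⟩ := h
  simp

private lemma aux_dvd_of_toZMod_zero {x : ℤ_[p]} (h : PadicInt.toZMod x = 0) :
    (p : ℤ_[p]) ∣ x := by
  have hx : x ∈ RingHom.ker (PadicInt.toZMod : ℤ_[p] →+* ZMod p) := h
  rw [PadicInt.ker_toZMod, PadicInt.maximalIdeal_eq_span_p] at hx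
  exact Ideal.mem_span_singleton.mp hx

private lemma aux_norm_le_inv_of_dvd {x : ℤ_[p]} (h : (p : ℤ_[p]) ∣ x) :
    ‖x‖ ≤ (p : ℝ)⁻¹ := by
  obtain ⟨y, rfl⟩ := h
  calc ‖(p : ℤ_[p]) * y‖ = (p : ℝ)⁻¹ * ‖y‖ := by rw [norm_mul, PadicInt.norm_p]
  _ ≤ (p : ℝ)⁻¹ * 1 := by
      have := PadicInt.norm_le_one y
      have hp0 : (0:ℝ) ≤ (p : ℝ)⁻¹ := by positivity
      nlinarith
  _ = (p : ℝ)⁻¹ := mul_one _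

/-- Pivot lemma: a square integral matrix with non-unit determinant kills a unimodular
vector modulo `p`. -/
private lemma aux_pivot {n : ℕ} (M : Matrix (Fin n) (Fin n) ℤ_[p]) (hdet : ‖M.det‖ < 1) :
    ∃ (w : Fin n → ℤ_[p]) (i0 : Fin n), ‖w i0‖ = 1 ∧
      ∀ i, ‖(M *ᵥ w) i‖ ≤ (p : ℝ)⁻¹ := by
  have hdet0 : (M.map (PadicInt.toZMod : ℤ_[p] →+* ZMod p)).det = 0 := by
    have h1 : PadicInt.toZMod M.det = 0 :=
      aux_toZMod_zero_of_dvd p ((PadicInt.norm_lt_one_iff_dvd _).mp hdet)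
    have h2 := RingHom.map_det (PadicInt.toZMod : ℤ_[p] →+* ZMod p) M
    rw [h1, RingHom.mapMatrix_apply] at h2
    exact h2.symm
  obtain ⟨v, hv0, hv⟩ := Matrix.exists_mulVec_eq_zero_iff.mpr hdet0
  set w : Fin n → ℤ_[p] := fun j => ((v j).val : ℤ_[p]) with hw_def
  have hw : ∀ j, PadicInt.toZMod (w j) = v j := by
    intro j
    have : PadicInt.toZMod ((((v j).val : ℕ)) : ℤ_[p]) = (((v j).val : ℕ) : ZMod p) :=
      map_natCast _ _
    rw [hw_def]
    simpa [ZMod.natCast_rightInverse (v j)] using this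
  obtain ⟨i0, hi0⟩ := Function.ne_iff.mp hv0
  refine ⟨w, i0, ?_, ?_⟩
  · rcases lt_or_eq_of_le (PadicInt.norm_le_one (w i0)) with h | h
    · exfalso
      apply hi0
      rw [← hw i0]
      exact aux_toZMod_zero_of_dvd p ((PadicInt.norm_lt_one_iff_dvd _).mp h)
    · exact h
  · intro i
    apply aux_norm_le_inv_of_dvd
    apply aux_dvd_of_toZMod_zero
    have hmap := aux_mulVec_map (PadicInt.toZMod : ℤ_[p] →+* ZMod p) M w
    have hcomp : (PadicInt.toZMod : ℤ_[p] → ZMod p) ∘ w = v := funext hw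
    rw [hcomp, hv] at hmap
    exact (congrFun hmap i).symm

private lemma aux_norm_det_map {n : ℕ} (Mz : Matrix (Fin n) (Fin n) ℤ_[p]) :
    ‖(Mz.map (PadicInt.Coe.ringHom)).det‖ = ‖Mz.det‖ := by
  have h2 := RingHom.map_det (PadicInt.Coe.ringHom (p := p)) Mz
  rw [RingHom.mapMatrix_apply] at h2
  rw [← h2]
  exact (PadicInt.norm_def).symm

end Aux

/-- final step of the proof of Proposition 9.1: `GL_n(ℚ_p)` is
generated as a group by `GL_n(ℤ_p)` together with the matrix `Π` having `(i, i+1)`-entries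
`1` (for `1 ≤ i ≤ n-1`), `(n, 1)`-entry `p`, and all other entries `0`. -/
theorem statement11 (p : ℕ) [Fact p.Prime] (n : ℕ) (hn : 1 ≤ n) :
    Subgroup.closure
        ({g : Matrix.GeneralLinearGroup (Fin n) ℚ_[p] |
            (∀ i j, ‖(g : Matrix (Fin n) (Fin n) ℚ_[p]) i j‖ ≤ 1) ∧
              ‖(g : Matrix (Fin n) (Fin n) ℚ_[p]).det‖ = 1} ∪
          {g : Matrix.GeneralLinearGroup (Fin n) ℚ_[p] |
            (g : Matrix (Fin n) (Fin n) ℚ_[p]) =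
              Matrix.of fun i j : Fin n =>
                if (j : ℕ) = (i : ℕ) + 1 then 1
                else if (i : ℕ) = n - 1 ∧ (j : ℕ) = 0 then (p : ℚ_[p]) else 0}) = ⊤ := by
  rcases n with _ | m
  · omega
  clear hn
  have hpprime : p.Prime := Fact.out
  have hp1 : (1:ℝ) < p := by exact_mod_cast hpprime.one_lt
  have hp0 : (0:ℝ) < p := lt_trans one_pos hp1
  have hpF : (p : ℚ_[p]) ≠ 0 := Nat.cast_ne_zero.mpr hpprime.ne_zero
  have hnormp : ‖(p : ℚ_[p])‖ = (p:ℝ)⁻¹ := Padic.norm_p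
  rw [Subgroup.eq_top_iff']
  intro g
  set 𝒮 : Set (Matrix.GeneralLinearGroup (Fin (m+1)) ℚ_[p]) :=
      ({g : Matrix.GeneralLinearGroup (Fin (m+1)) ℚ_[p] |
            (∀ i j, ‖(g : Matrix (Fin (m+1)) (Fin (m+1)) ℚ_[p]) i j‖ ≤ 1) ∧
              ‖(g : Matrix (Fin (m+1)) (Fin (m+1)) ℚ_[p]).det‖ = 1} ∪
          {g : Matrix.GeneralLinearGroup (Fin (m+1)) ℚ_[p] |
            (g : Matrix (Fin (m+1)) (Fin (m+1)) ℚ_[p]) =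
              Matrix.of fun i j : Fin (m+1) =>
                if (j : ℕ) = (i : ℕ) + 1 then 1
                else if (i : ℕ) = (m+1) - 1 ∧ (j : ℕ) = 0 then (p : ℚ_[p]) else 0}) with h𝒮
  -- membership criterion for integral matrices with unit determinant
  have memK : ∀ h : Matrix.GeneralLinearGroup (Fin (m+1)) ℚ_[p],
      (∀ i j, ‖(h : Matrix (Fin (m+1)) (Fin (m+1)) ℚ_[p]) i j‖ ≤ 1) →
      ‖(h : Matrix (Fin (m+1)) (Fin (m+1)) ℚ_[p]).det‖ = 1 →
      h ∈ Subgroup.closure 𝒮 := by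
    intro h h1 h2
    exact Subgroup.subset_closure (Or.inl ⟨h1, h2⟩)
  -- the matrix Π and its decomposition
  set PiM : Matrix (Fin (m+1)) (Fin (m+1)) ℚ_[p] :=
      Matrix.of fun i j : Fin (m+1) =>
        if (j : ℕ) = (i : ℕ) + 1 then 1
        else if (i : ℕ) = (m+1) - 1 ∧ (j : ℕ) = 0 then (p : ℚ_[p]) else 0 with hPi_def
  set σ : Equiv.Perm (Fin (m+1)) := finRotate (m+1) with hσ_def
  set Cmat : Matrix (Fin (m+1)) (Fin (m+1)) ℚ_[p] := σ.toPEquiv.toMatrix with hC_def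
  set d : Fin (m+1) → ℚ_[p] := fun j => if (j:ℕ) = 0 then (p:ℚ_[p]) else 1 with hd_def
  set Dmat : Matrix (Fin (m+1)) (Fin (m+1)) ℚ_[p] := diagonal d with hD_def
  have hdecomp : PiM = Cmat * Dmat := by
    ext i j
    rw [hD_def, Matrix.mul_diagonal, hC_def, (show ∀ i j, σ.toPEquiv.toMatrix i j = (1 : Matrix (Fin (m+1)) (Fin (m+1)) ℚ_[p]) (σ i) j from fun i j => by simp [Matrix.one_apply, Pi.single_apply]), Matrix.one_apply]
    rcases Nat.lt_or_ge (i:ℕ) m with him | him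
    · have hσi : ((σ i : Fin (m+1)) : ℕ) = (i:ℕ) + 1 := by
        rw [hσ_def]
        show ((finRotate (m+1)) i : ℕ) = (i:ℕ) + 1
        rw [finRotate_succ_apply]
        exact Fin.val_add_one_of_lt (by rwa [Fin.lt_iff_val_lt_val, Fin.val_last])
      have hkey : (σ i = j) ↔ ((j:ℕ) = (i:ℕ) + 1) := by
        rw [Fin.ext_iff, hσi]; exact eq_comm
      by_cases hj : (j:ℕ) = (i:ℕ) + 1
      · have : σ i = j := hkey.mpr hj
        simp only [hPi_def, Matrix.of_apply, hj, if_true, this, hd_def]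
        have : (j:ℕ) ≠ 0 := by omega
        simp [this]
      · have : ¬ (σ i = j) := fun hc => hj (hkey.mp hc)
        have him' : (i:ℕ) ≠ m := by omega
        simp [hPi_def, hj, this, him']
    · have him' : (i:ℕ) = m := by have := i.isLt; omega
      have hilast : i = Fin.last m := by
        apply Fin.ext; rw [Fin.val_last]; exact him'
      have hσi : σ i = 0 := by
        rw [hσ_def]
        show (finRotate (m+1)) i = 0
        rw [finRotate_succ_apply, hilast, Fin.last_add_one]
      have hjne : (j:ℕ) ≠ (i:ℕ) + 1 := by have := j.isLt; omega
      by_cases hj : (j:ℕ) = 0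
      · have hj0 : j = 0 := by apply Fin.ext; simpa using hj
        have : σ i = j := by rw [hσi, hj0]
        simp [hPi_def, hjne, him', hj, hj0, this, hd_def]
      · have : ¬ (σ i = j) := by
          rw [hσi]; intro hc; apply hj; rw [← hc]; simp
        simp [hPi_def, hjne, hj, this, (show j ≠ 0 from fun hc => hj (by rw [hc]; rfl))]
  have hdetC : Cmat.det = ((Equiv.Perm.sign σ : ℤ) : ℚ_[p]) := by
    rw [hC_def]; exact_mod_cast Matrix.det_permutation σ
  have hnormdetC : ‖Cmat.det‖ = 1 := by
    rcases Int.units_eq_one_or (Equiv.Perm.sign σ) with h | h <;>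
      simp [hdetC, h]
  have hdetC_ne : Cmat.det ≠ 0 := by
    intro h; rw [h] at hnormdetC; simp at hnormdetC
  have hCint : ∀ i j, ‖Cmat i j‖ ≤ 1 := by
    intro i j
    rw [hC_def, (show ∀ i j, σ.toPEquiv.toMatrix i j = (1 : Matrix (Fin (m+1)) (Fin (m+1)) ℚ_[p]) (σ i) j from fun i j => by simp [Matrix.one_apply, Pi.single_apply]), Matrix.one_apply]
    split_ifs <;> simp
  have hdetD : Dmat.det = (p : ℚ_[p]) := by
    rw [hD_def, Matrix.det_diagonal]
    have : ∀ j : Fin (m+1), d j = if j = 0 then (p:ℚ_[p]) else 1 := by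
      intro j
      rw [hd_def]
      congr 1
      simp only [Fin.val_eq_zero_iff]
    calc (∏ j, d j) = ∏ j : Fin (m+1), (if j = 0 then (p:ℚ_[p]) else 1) := by
          exact Finset.prod_congr rfl fun j _ => this j
    _ = (p:ℚ_[p]) := by rw [Finset.prod_ite_eq']; simp
  have hdetD_ne : Dmat.det ≠ 0 := by rw [hdetD]; exact hpF
  have hdetPi_ne : PiM.det ≠ 0 := by
    rw [hdecomp, Matrix.det_mul]
    exact mul_ne_zero hdetC_ne hdetD_ne
  set PiGL := Matrix.GeneralLinearGroup.mkOfDetNeZero PiM hdetPi_ne with hPiGL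
  set CGL := Matrix.GeneralLinearGroup.mkOfDetNeZero Cmat hdetC_ne with hCGL
  set DGL := Matrix.GeneralLinearGroup.mkOfDetNeZero Dmat hdetD_ne with hDGL
  have hPimem : PiGL ∈ Subgroup.closure 𝒮 := Subgroup.subset_closure (Or.inr rfl)
  have hCmem : CGL ∈ Subgroup.closure 𝒮 := memK CGL hCint hnormdetC
  have hDmem : DGL ∈ Subgroup.closure 𝒮 := by
    have hCD : CGL * DGL = PiGL := by
      apply Units.ext
      rw [Units.val_mul]
      exact hdecomp.symm
    have : DGL = CGL⁻¹ * PiGL := by rw [← hCD, inv_mul_cancel_left]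
    rw [this]
    exact Subgroup.mul_mem _ (Subgroup.inv_mem _ hCmem) hPimem
  -- integral lifts
  have normdet : ∀ M : Matrix (Fin (m+1)) (Fin (m+1)) ℚ_[p], (∀ i j, ‖M i j‖ ≤ 1) →
      ∃ Mz : Matrix (Fin (m+1)) (Fin (m+1)) ℤ_[p],
        Mz.map (PadicInt.Coe.ringHom) = M ∧ ‖M.det‖ = ‖Mz.det‖ := by
    intro M hM
    have hmapeq : (Matrix.of fun i j => (⟨M i j, hM i j⟩ : ℤ_[p])).map
        (PadicInt.Coe.ringHom) = M := rfl
    refine ⟨_, hmapeq, ?_⟩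
    conv_lhs => rw [← hmapeq]
    exact aux_norm_det_map p _
  -- all integral invertible matrices are in the closure
  have main : ∀ k : ℕ, ∀ h : Matrix.GeneralLinearGroup (Fin (m+1)) ℚ_[p],
      (∀ i j, ‖(h : Matrix (Fin (m+1)) (Fin (m+1)) ℚ_[p]) i j‖ ≤ 1) →
      ((p:ℝ)⁻¹)^k ≤ ‖(h : Matrix (Fin (m+1)) (Fin (m+1)) ℚ_[p]).det‖ →
      h ∈ Subgroup.closure 𝒮 := by
    intro k
    induction k with
    | zero =>
      intro h h1 h2
      apply memK h h1
      obtain ⟨Mz, hmap, hdeteq⟩ := normdet _ h1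
      refine le_antisymm ?_ (by simpa using h2)
      rw [hdeteq]
      exact PadicInt.norm_le_one _
    | succ k ih =>
      intro h h1 h2
      by_cases hunit : ‖(h : Matrix (Fin (m+1)) (Fin (m+1)) ℚ_[p]).det‖ = 1
      · exact memK h h1 hunit
      obtain ⟨Mz, hmap, hdeteq⟩ := normdet _ h1
      set M : Matrix (Fin (m+1)) (Fin (m+1)) ℚ_[p] :=
        ((h : Matrix (Fin (m+1)) (Fin (m+1)) ℚ_[p])) with hM_def
      have hdetle : ‖M.det‖ ≤ 1 := by rw [hdeteq]; exact PadicInt.norm_le_one _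
      have hlt : ‖M.det‖ < 1 := lt_of_le_of_ne hdetle hunit
      have hltz : ‖Mz.det‖ < 1 := by rw [← hdeteq]; exact hlt
      obtain ⟨w, i0, hwi0, hdvd⟩ := aux_pivot p Mz hltz
      set w' : Fin (m+1) → ℚ_[p] := fun j => ((w j : ℚ_[p])) with hw'_def
      have hw'le : ∀ j, ‖w' j‖ ≤ 1 := by
        intro j
        have := PadicInt.norm_le_one (w j)
        rwa [PadicInt.norm_def] at this
      have hw'i0 : ‖w' i0‖ = 1 := by rwa [PadicInt.norm_def] at hwi0
      have hMw : M *ᵥ w' = fun i => (((Mz *ᵥ w) i : ℤ_[p]) : ℚ_[p]) := by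
        have h0 := aux_mulVec_map (PadicInt.Coe.ringHom (p := p)) Mz w
        rw [hmap] at h0
        exact h0
      have hMwnorm : ∀ i, ‖(M *ᵥ w') i‖ ≤ (p:ℝ)⁻¹ := by
        intro i
        rw [hMw]
        have := hdvd i
        rwa [PadicInt.norm_def] at this
      set u : Matrix (Fin (m+1)) (Fin (m+1)) ℚ_[p] := updateCol 1 i0 w' with hu_def
      have hudet : u.det = w' i0 := by
        rw [hu_def, ← Matrix.cramer_apply, Matrix.cramer_one]
        rfl
      set τ : Equiv.Perm (Fin (m+1)) := Equiv.swap 0 i0 with hτ_def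
      set T : Matrix (Fin (m+1)) (Fin (m+1)) ℚ_[p] := τ.toPEquiv.toMatrix with hT_def
      have hmulT : ∀ X : Matrix (Fin (m+1)) (Fin (m+1)) ℚ_[p],
          X * T = X.submatrix id τ := by
        intro X
        rw [hT_def, PEquiv.mul_toMatrix_toPEquiv, hτ_def, Equiv.symm_swap]
      have hdetT : T.det = ((Equiv.Perm.sign τ : ℤ) : ℚ_[p]) := by
        rw [hT_def]; exact_mod_cast Matrix.det_permutation τ
      have hnormdetT : ‖T.det‖ = 1 := by
        rcases Int.units_eq_one_or (Equiv.Perm.sign τ) with hs | hs <;> simp [hdetT, hs]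
      have hdetT_ne : T.det ≠ 0 := fun hc => by simp [hc] at hnormdetT
      have hMu : M * u = updateCol M i0 (M *ᵥ w') := by
        ext i j
        by_cases hj : j = i0
        · subst hj
          simp [Matrix.mul_apply, hu_def, Matrix.updateCol_apply, Matrix.mulVec,
            dotProduct]
        · simp [Matrix.mul_apply, hu_def, Matrix.updateCol_apply, hj, Matrix.one_apply,
            mul_ite, Finset.sum_ite_eq']
      set d' : Fin (m+1) → ℚ_[p] := fun j => if (j:ℕ) = 0 then (p:ℚ_[p])⁻¹ else 1 with hd'_def
      set B : Matrix (Fin (m+1)) (Fin (m+1)) ℚ_[p] := M * u * T * diagonal d' with hB_def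
      have hswap0 : τ 0 = i0 := Equiv.swap_apply_left _ _
      have hBapply : ∀ i j, B i j = (updateCol M i0 (M *ᵥ w')) i (τ j) * d' j := by
        intro i j
        rw [hB_def, Matrix.mul_diagonal, hmulT (M * u), Matrix.submatrix_apply, hMu]
        rfl
      have hBnorm : ∀ i j, ‖B i j‖ ≤ 1 := by
        intro i j
        rw [hBapply]
        by_cases hj : j = 0
        · subst hj
          rw [hswap0, Matrix.updateCol_apply, if_pos rfl]
          have hd0 : d' (0 : Fin (m+1)) = (p:ℚ_[p])⁻¹ := by rw [hd'_def]; simp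
          rw [hd0, norm_mul, norm_inv, hnormp, inv_inv]
          calc ‖(M *ᵥ w') i‖ * (p:ℝ) ≤ (p:ℝ)⁻¹ * p :=
                mul_le_mul_of_nonneg_right (hMwnorm i) (le_of_lt hp0)
          _ = 1 := inv_mul_cancel₀ (ne_of_gt hp0)
        · have hτj : τ j ≠ i0 := by
            intro hc
            exact hj (τ.injective (hc.trans hswap0.symm))
          rw [Matrix.updateCol_apply, if_neg hτj]
          have hjv : (j:ℕ) ≠ 0 := fun hc => hj (Fin.ext (by simpa using hc))
          have hd1 : d' j = 1 := by rw [hd'_def]; simp [hjv]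
          rw [hd1, mul_one]
          exact h1 i (τ j)
      have hdetd' : (diagonal d').det = (p:ℚ_[p])⁻¹ := by
        rw [Matrix.det_diagonal]
        have hdj : ∀ j : Fin (m+1), d' j = if j = 0 then (p:ℚ_[p])⁻¹ else 1 := by
          intro j; rw [hd'_def]; simp only [Fin.val_eq_zero_iff]
        calc (∏ j, d' j) = ∏ j : Fin (m+1), (if j = 0 then (p:ℚ_[p])⁻¹ else 1) :=
              Finset.prod_congr rfl fun j _ => hdj j
        _ = (p:ℚ_[p])⁻¹ := by rw [Finset.prod_ite_eq']; simp
      have hdetB : B.det = M.det * u.det * T.det * (p:ℚ_[p])⁻¹ := by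
        rw [hB_def, Matrix.det_mul, Matrix.det_mul, Matrix.det_mul, hdetd']
      have hnormB : ‖B.det‖ = ‖M.det‖ * p := by
        rw [hdetB, norm_mul, norm_mul, norm_mul, hudet, hw'i0, hnormdetT, norm_inv,
          hnormp, inv_inv]
        ring
      have hMdetpos : 0 < ‖M.det‖ := lt_of_lt_of_le (by positivity) h2
      have hdetB_ne : B.det ≠ 0 := by
        intro hc
        rw [hc, norm_zero] at hnormB
        nlinarith
      have hdetuT : (u * T).det = w' i0 * T.det := by rw [Matrix.det_mul, hudet]
      have hw'i0_ne : w' i0 ≠ 0 := by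
        intro hc; rw [hc, norm_zero] at hw'i0; norm_num at hw'i0
      have hdetuT_ne : (u * T).det ≠ 0 := by
        rw [hdetuT]; exact mul_ne_zero hw'i0_ne hdetT_ne
      have hnormuT : ‖(u * T).det‖ = 1 := by
        rw [hdetuT, norm_mul, hw'i0, hnormdetT, one_mul]
      have huTentries : ∀ i j, ‖(u * T) i j‖ ≤ 1 := by
        intro i j
        rw [hmulT u, Matrix.submatrix_apply, hu_def, Matrix.updateCol_apply]
        split_ifs with hc
        · exact hw'le i
        · rw [Matrix.one_apply]; split_ifs <;> simp
      set BGL := Matrix.GeneralLinearGroup.mkOfDetNeZero B hdetB_ne with hBGL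
      set uTGL := Matrix.GeneralLinearGroup.mkOfDetNeZero (u * T) hdetuT_ne with huTGL
      have huTmem : uTGL ∈ Subgroup.closure 𝒮 := memK uTGL huTentries hnormuT
      have hBmem : BGL ∈ Subgroup.closure 𝒮 := by
        apply ih BGL hBnorm
        show ((p:ℝ)⁻¹)^k ≤ ‖B.det‖
        rw [hnormB]
        calc ((p:ℝ)⁻¹)^k = ((p:ℝ)⁻¹)^(k+1) * p := by
              rw [pow_succ]; field_simp
        _ ≤ ‖M.det‖ * p := mul_le_mul_of_nonneg_right h2 (le_of_lt hp0)
      have hfact : h = BGL * DGL * uTGL⁻¹ := by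
        apply Units.ext
        rw [Units.val_mul, Units.val_mul]
        have hinv : ((uTGL⁻¹ : Matrix.GeneralLinearGroup (Fin (m+1)) ℚ_[p]) :
            Matrix (Fin (m+1)) (Fin (m+1)) ℚ_[p]) = (u * T)⁻¹ := Matrix.coe_units_inv uTGL
        rw [hinv]
        show M = B * Dmat * (u * T)⁻¹
        have hBD : B * Dmat = M * (u * T) := by
          rw [hB_def, hD_def]
          calc M * u * T * diagonal d' * diagonal d
              = M * u * T * (diagonal d' * diagonal d) := by rw [mul_assoc]
          _ = M * u * T := by
                rw [Matrix.diagonal_mul_diagonal]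
                have hone : (fun j => d' j * d j) = fun _ : Fin (m+1) => (1:ℚ_[p]) := by
                  funext j
                  rw [hd'_def, hd_def]
                  by_cases hj : (j:ℕ) = 0 <;> simp [hj, inv_mul_cancel₀ hpF]
                rw [hone, Matrix.diagonal_one, mul_one]
          _ = M * (u * T) := by rw [mul_assoc]
        rw [hBD, Matrix.mul_nonsing_inv_cancel_right _ _ (isUnit_iff_ne_zero.mpr hdetuT_ne)]
      rw [hfact]
      exact Subgroup.mul_mem _ (Subgroup.mul_mem _ hBmem hDmem) (Subgroup.inv_mem _ huTmem)
  -- conclude: clear denominators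
  set M : Matrix (Fin (m+1)) (Fin (m+1)) ℚ_[p] :=
    (g : Matrix (Fin (m+1)) (Fin (m+1)) ℚ_[p]) with hM_def
  obtain ⟨N, hN⟩ := pow_unbounded_of_one_lt (∑ i, ∑ j, ‖M i j‖) hp1
  have hNentry : ∀ i j, ‖M i j‖ ≤ (p:ℝ)^N := by
    intro i j
    refine le_trans ?_ (le_of_lt hN)
    calc ‖M i j‖ ≤ ∑ j', ‖M i j'‖ :=
          Finset.single_le_sum (fun _ _ => norm_nonneg _) (Finset.mem_univ j)
    _ ≤ ∑ i', ∑ j', ‖M i' j'‖ :=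
          Finset.single_le_sum (fun _ _ => Finset.sum_nonneg fun _ _ => norm_nonneg _)
            (Finset.mem_univ i)
  set s : Matrix (Fin (m+1)) (Fin (m+1)) ℚ_[p] :=
    ((p:ℚ_[p])^N) • (1 : Matrix (Fin (m+1)) (Fin (m+1)) ℚ_[p]) with hs_def
  have hsdet : s.det = ((p:ℚ_[p])^N)^(m+1) := by
    rw [hs_def, Matrix.det_smul, Matrix.det_one, mul_one]
    congr 1
    simp
  have hsdet_ne : s.det ≠ 0 := by rw [hsdet]; exact pow_ne_zero _ (pow_ne_zero _ hpF)
  set sGL := Matrix.GeneralLinearGroup.mkOfDetNeZero s hsdet_ne with hsGL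
  have hprod_coe : ((sGL * g : Matrix.GeneralLinearGroup (Fin (m+1)) ℚ_[p]) :
      Matrix (Fin (m+1)) (Fin (m+1)) ℚ_[p]) = ((p:ℚ_[p])^N) • M := by
    rw [Units.val_mul]
    show s * M = _
    rw [hs_def, Matrix.smul_mul, one_mul]
  have hentries : ∀ i j, ‖((sGL * g : Matrix.GeneralLinearGroup (Fin (m+1)) ℚ_[p]) :
      Matrix (Fin (m+1)) (Fin (m+1)) ℚ_[p]) i j‖ ≤ 1 := by
    intro i j
    rw [hprod_coe, Matrix.smul_apply, smul_eq_mul, norm_mul, norm_pow, hnormp]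
    calc ((p:ℝ)⁻¹)^N * ‖M i j‖ ≤ ((p:ℝ)⁻¹)^N * (p:ℝ)^N :=
          mul_le_mul_of_nonneg_left (hNentry i j) (by positivity)
    _ = 1 := by rw [← mul_pow, inv_mul_cancel₀ (ne_of_gt hp0), one_pow]
  have hdetpos : 0 < ‖((sGL * g : Matrix.GeneralLinearGroup (Fin (m+1)) ℚ_[p]) :
      Matrix (Fin (m+1)) (Fin (m+1)) ℚ_[p]).det‖ := by
    have hne : ((sGL * g : Matrix.GeneralLinearGroup (Fin (m+1)) ℚ_[p]) :
        Matrix (Fin (m+1)) (Fin (m+1)) ℚ_[p]).det ≠ 0 :=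
      ((Matrix.isUnit_iff_isUnit_det _).mp (sGL * g).isUnit).ne_zero
    exact norm_pos_iff.mpr hne
  obtain ⟨k, hk⟩ := exists_pow_lt_of_lt_one hdetpos (inv_lt_one_of_one_lt₀ hp1)
  have hmem1 : sGL * g ∈ Subgroup.closure 𝒮 := main k (sGL * g) hentries (le_of_lt hk)
  have hs_entries : ∀ i j, ‖(sGL : Matrix (Fin (m+1)) (Fin (m+1)) ℚ_[p]) i j‖ ≤ 1 := by
    intro i j
    show ‖s i j‖ ≤ 1
    rw [hs_def, Matrix.smul_apply, Matrix.one_apply, smul_eq_mul]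
    split_ifs with hc
    · rw [mul_one, norm_pow, hnormp]
      exact pow_le_one₀ (by positivity) (le_of_lt (inv_lt_one_of_one_lt₀ hp1))
    · simp
  have hs_detnorm : ((p:ℝ)⁻¹)^(N*(m+1)) ≤ ‖(sGL : Matrix (Fin (m+1)) (Fin (m+1)) ℚ_[p]).det‖ := by
    show _ ≤ ‖s.det‖
    rw [hsdet, ← pow_mul, norm_pow, hnormp, inv_pow]
  have hsmem : sGL ∈ Subgroup.closure 𝒮 := main (N*(m+1)) sGL hs_entries hs_detnorm
  have hgeq : g = sGL⁻¹ * (sGL * g) := by rw [inv_mul_cancel_left]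
  rw [hgeq]
  exact Subgroup.mul_mem _ (Subgroup.inv_mem _ hsmem) hmem1
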